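/- Let $T_m$ be a tree on $m$ vertices and $G$ any graph. Then $\hom(T_m, G) \leq \hom(S_m, G)$, where $S_m$ is the star on $m$ vertices. -/

import Mathlib

/-- The number of graph homomorphisms from `H` to `G`. -/
noncomputable def homCount {α β : Type*} (H : SimpleGraph α) (G : SimpleGraph β) : ℕ :=
  Nat.card (H →g G)

/-- The star on `n` vertices: vertex `0` is the center, adjacent to all other vertices. -/
def starGraph (n : ℕ) [NeZero n] : SimpleGraph (Fin n) where
  Adj u v := u ≠ v ∧ (u = 0 ∨ v = 0)
  symm := ⟨by rintro u v ⟨h₁, h₂⟩; exact ⟨h₁.symm, h₂.symm⟩⟩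
  loopless := ⟨by rintro u ⟨h, _⟩; exact h rfl⟩

open Finset

namespace TreeStar

variable {W : Type*} [Fintype W] (G : SimpleGraph W)

open Classical in
noncomputable def aa (x y : W) : ℝ := if G.Adj x y then 1 else 0

noncomputable def dd (x : W) : ℝ := ∑ y, aa G x y

lemma aa_nonneg (x y : W) : 0 ≤ aa G x y := by
  unfold aa; split <;> norm_num

lemma dd_nonneg (x : W) : 0 ≤ dd G x :=
  Finset.sum_nonneg fun y _ => aa_nonneg G x y

lemma sum_dd_pow_nonneg (k : ℕ) : 0 ≤ ∑ w, dd G w ^ k :=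
  Finset.sum_nonneg fun w _ => pow_nonneg (dd_nonneg G w) k

open Classical in
/-- indicator that `f` respects all parent constraints -/
noncomputable def Ind {ι : Type*} (r : ι) (par : ι → ι) (f : ι → W) : ℝ :=
  if (∀ i, i ≠ r → G.Adj (f (par i)) (f i)) then 1 else 0

lemma Ind01 {ι : Type*} (r : ι) (par : ι → ι) (f : ι → W) :
    Ind G r par f = 0 ∨ Ind G r par f = 1 := by
  unfold Ind; split
  · right; rfl
  · left; rfl

lemma Ind_nonneg {ι : Type*} (r : ι) (par : ι → ι) (f : ι → W) : 0 ≤ Ind G r par f := by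
  rcases Ind01 G r par f with h | h <;> rw [h] <;> norm_num

lemma Ind_eq_one {ι : Type*} {r : ι} {par : ι → ι} {f : ι → W}
    (h : ∀ i, i ≠ r → G.Adj (f (par i)) (f i)) : Ind G r par f = 1 := by
  unfold Ind; rw [if_pos h]

lemma Ind_eq_zero {ι : Type*} {r : ι} {par : ι → ι} {f : ι → W}
    (h : ¬ (∀ i, i ≠ r → G.Adj (f (par i)) (f i))) : Ind G r par f = 0 := by
  unfold Ind; rw [if_neg h]

lemma Ind_congr {ι : Type*} (r r' : ι) (par par' : ι → ι) (f g : ι → W)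
    (h : (∀ i, i ≠ r → G.Adj (f (par i)) (f i)) ↔ (∀ i, i ≠ r' → G.Adj (g (par' i)) (g i))) :
    Ind G r par f = Ind G r' par' g := by
  classical
  unfold Ind
  exact if_congr h rfl rfl

/-- weighted hom count of a rooted parent system -/
noncomputable def F {ι : Type*} [Fintype (ι → W)] (r : ι) (par : ι → ι) (v₀ : ι) (t : ℕ) : ℝ :=
  ∑ f : ι → W, Ind G r par f * (dd G (f v₀)) ^ t

/-- doubly weighted hom count -/
noncomputable def F2 {ι : Type*} [Fintype (ι → W)] (r : ι) (par : ι → ι) (z v₀ : ι) (t : ℕ) : ℝ :=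
  ∑ f : ι → W, Ind G r par f * dd G (f z) * (dd G (f v₀)) ^ t

lemma F_nonneg {ι : Type*} [Fintype (ι → W)] (r : ι) (par : ι → ι) (v₀ : ι) (t : ℕ) :
    0 ≤ F G r par v₀ t := by
  unfold F
  exact Finset.sum_nonneg fun f _ =>
    mul_nonneg (Ind_nonneg G r par f) (pow_nonneg (dd_nonneg G _) t)

lemma F2_eq_F_same {ι : Type*} [Fintype (ι → W)] (r : ι) (par : ι → ι) (v₀ : ι) (t : ℕ) :
    F2 G r par v₀ v₀ t = F G r par v₀ (t+1) := by
  unfold F2 F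
  refine Finset.sum_congr rfl fun f _ => ?_
  rw [pow_succ]; ring

lemma F2_eq_F_zero {ι : Type*} [Fintype (ι → W)] (r : ι) (par : ι → ι) (z v₀ : ι) :
    F2 G r par z v₀ 0 = F G r par z 1 := by
  unfold F2 F
  refine Finset.sum_congr rfl fun f _ => ?_
  rw [pow_zero, pow_one]; ring

/-- Hölder step -/
lemma F2_le {ι : Type*} [Fintype (ι → W)] (r : ι) (par : ι → ι) (z v₀ : ι) (t : ℕ) (htpos : 0 < t)
    (S : ℝ) (hS : 0 ≤ S) (h1 : F G r par v₀ (t+1) ≤ S) (h2 : F G r par z (t+1) ≤ S) :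
    F2 G r par z v₀ t ≤ S := by
  classical
  have ht0 : (t:ℝ) ≠ 0 := Nat.cast_ne_zero.mpr (Nat.pos_iff_ne_zero.mp htpos)
  have hg1 : ((t:ℝ)/((t:ℝ)+1)) ≠ 0 := by positivity
  have hg2 : (1/((t:ℝ)+1) : ℝ) ≠ 0 := by positivity
  have htpos' : (0:ℝ) < t := by positivity
  have hpq : Real.HolderConjugate (((t:ℝ)+1)/(t:ℝ)) ((t:ℝ)+1) := by
    rw [Real.holderConjugate_iff]
    constructor
    · rw [lt_div_iff₀ htpos']; linarith
    · field_simp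
  unfold F2
  have hXnn : ∀ (x : ι) (f : ι → W), 0 ≤ Ind G r par f * dd G (f x) ^ (t+1) := by
    intro x f
    exact mul_nonneg (Ind_nonneg G r par f) (pow_nonneg (dd_nonneg G _) _)
  have hpoint : ∀ f : ι → W, Ind G r par f * dd G (f z) * dd G (f v₀) ^ t
      = (Ind G r par f * dd G (f v₀) ^ (t+1)) ^ ((t:ℝ)/((t:ℝ)+1))
        * (Ind G r par f * dd G (f z) ^ (t+1)) ^ (1/((t:ℝ)+1)) := by
    intro f
    rcases Ind01 G r par f with h0 | h1
    · simp [h0, Real.zero_rpow hg1, Real.zero_rpow hg2]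
    · rw [h1, one_mul, one_mul, one_mul]
      have hx1 : (dd G (f v₀) ^ (t+1) : ℝ) ^ ((t:ℝ)/((t:ℝ)+1)) = dd G (f v₀) ^ t := by
        rw [← Real.rpow_natCast (dd G (f v₀)) (t+1), ← Real.rpow_mul (dd_nonneg G _)]
        have he : ((t+1 : ℕ) : ℝ) * ((t:ℝ)/((t:ℝ)+1)) = ((t:ℕ) : ℝ) := by
          push_cast; field_simp
        rw [he, Real.rpow_natCast]
      have hx2 : (dd G (f z) ^ (t+1) : ℝ) ^ (1/((t:ℝ)+1)) = dd G (f z) := by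
        rw [← Real.rpow_natCast (dd G (f z)) (t+1), ← Real.rpow_mul (dd_nonneg G _)]
        have he : ((t+1 : ℕ) : ℝ) * (1/((t:ℝ)+1)) = 1 := by
          push_cast; field_simp
        rw [he, Real.rpow_one]
      rw [hx1, hx2]
      ring
  have hup : ∀ f : ι → W,
      ((Ind G r par f * dd G (f v₀) ^ (t+1)) ^ ((t:ℝ)/((t:ℝ)+1))) ^ (((t:ℝ)+1)/(t:ℝ))
        = Ind G r par f * dd G (f v₀) ^ (t+1) := by
    intro f
    rw [← Real.rpow_mul (hXnn v₀ f)]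
    have he : (t:ℝ)/((t:ℝ)+1) * (((t:ℝ)+1)/(t:ℝ)) = 1 := by field_simp
    rw [he, Real.rpow_one]
  have hvq : ∀ f : ι → W,
      ((Ind G r par f * dd G (f z) ^ (t+1)) ^ (1/((t:ℝ)+1))) ^ ((t:ℝ)+1)
        = Ind G r par f * dd G (f z) ^ (t+1) := by
    intro f
    rw [← Real.rpow_mul (hXnn z f)]
    have he : 1/((t:ℝ)+1) * ((t:ℝ)+1) = 1 := by field_simp
    rw [he, Real.rpow_one]
  calc ∑ f : ι → W, Ind G r par f * dd G (f z) * dd G (f v₀) ^ t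
      = ∑ f : ι → W, (Ind G r par f * dd G (f v₀) ^ (t+1)) ^ ((t:ℝ)/((t:ℝ)+1))
          * (Ind G r par f * dd G (f z) ^ (t+1)) ^ (1/((t:ℝ)+1)) :=
        Finset.sum_congr rfl fun f _ => hpoint f
    _ ≤ (∑ f : ι → W, ((Ind G r par f * dd G (f v₀) ^ (t+1)) ^ ((t:ℝ)/((t:ℝ)+1))) ^ (((t:ℝ)+1)/(t:ℝ))) ^ (1/(((t:ℝ)+1)/(t:ℝ)))
        * (∑ f : ι → W, ((Ind G r par f * dd G (f z) ^ (t+1)) ^ (1/((t:ℝ)+1))) ^ ((t:ℝ)+1)) ^ (1/((t:ℝ)+1)) :=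
        Real.inner_le_Lp_mul_Lq_of_nonneg Finset.univ hpq
          (fun f _ => Real.rpow_nonneg (hXnn v₀ f) _)
          (fun f _ => Real.rpow_nonneg (hXnn z f) _)
    _ = (F G r par v₀ (t+1)) ^ (1/(((t:ℝ)+1)/(t:ℝ))) * (F G r par z (t+1)) ^ (1/((t:ℝ)+1)) := by
        rw [Finset.sum_congr rfl fun f _ => hup f, Finset.sum_congr rfl fun f _ => hvq f]
        rfl
    _ ≤ S ^ (1/(((t:ℝ)+1)/(t:ℝ))) * S ^ (1/((t:ℝ)+1)) := by
        have e1 := Real.rpow_le_rpow (F_nonneg G r par v₀ (t+1)) h1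
          (by positivity : (0:ℝ) ≤ 1/(((t:ℝ)+1)/(t:ℝ)))
        have e2 := Real.rpow_le_rpow (F_nonneg G r par z (t+1)) h2
          (by positivity : (0:ℝ) ≤ 1/((t:ℝ)+1))
        exact mul_le_mul e1 e2 (Real.rpow_nonneg (F_nonneg G r par z (t+1)) _)
          (Real.rpow_nonneg hS _)
    _ = S := by
        have hadd : 1/(((t:ℝ)+1)/(t:ℝ)) + 1/((t:ℝ)+1) = 1 := by
          rw [one_div, one_div, hpq.inv_add_inv_eq_one]
        rw [← Real.rpow_add' hS (by rw [hadd]; norm_num), hadd, Real.rpow_one]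

section Delete

variable {ι : Type*}

/-- the parent map of the system obtained by deleting a non-parent vertex `j` -/
def parDel (r : ι) (par : ι → ι) (hr : par r = r) (j : ι) (hjr : j ≠ r)
    (hjnp : ∀ i, i ≠ r → par i ≠ j) : {i : ι // i ≠ j} → {i : ι // i ≠ j} := fun i =>
  ⟨par i.1, by
    rcases eq_or_ne i.1 r with h | h
    · rw [h, hr]; exact Ne.symm hjr
    · exact hjnp i.1 h⟩

lemma delete_key [Fintype (ι → W)] (r : ι) (par : ι → ι) (v₀ : ι) (t : ℕ)
    (hr : par r = r)
    (j : ι) (hjr : j ≠ r) (hjv : j ≠ v₀) (hpj : par j ≠ j)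
    (hjnp : ∀ i, i ≠ r → par i ≠ j)
    [Fintype ({i : ι // i ≠ j} → W)] [DecidableEq ι] :
    F G r par v₀ t
      = F2 G (⟨r, Ne.symm hjr⟩ : {i : ι // i ≠ j}) (parDel r par hr j hjr hjnp)
          ⟨par j, hpj⟩ ⟨v₀, Ne.symm hjv⟩ t := by
  set r' : {i : ι // i ≠ j} := ⟨r, Ne.symm hjr⟩
  set par' := parDel r par hr j hjr hjnp with hpar'def
  set z' : {i : ι // i ≠ j} := ⟨par j, hpj⟩
  set v₀' : {i : ι // i ≠ j} := ⟨v₀, Ne.symm hjv⟩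
  set e := Equiv.funSplitAt j W with hedef
  have hfj : ∀ (y : W) (g : {i : ι // i ≠ j} → W), e.symm (y, g) j = y := by
    intro y g; simp [hedef]
  have hfx : ∀ (y : W) (g : {i : ι // i ≠ j} → W) (x : ι) (hx : x ≠ j),
      e.symm (y, g) x = g ⟨x, hx⟩ := by
    intro y g x hx; simp [hedef, hx]
  unfold F F2
  rw [← Equiv.sum_comp e.symm, Fintype.sum_prod_type, Finset.sum_comm]
  refine Finset.sum_congr rfl fun g _ => ?_
  have hcond : ∀ y : W,
      (∀ i, i ≠ r → G.Adj (e.symm (y, g) (par i)) (e.symm (y, g) i))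
        ↔ (G.Adj (g z') y ∧ ∀ i', i' ≠ r' → G.Adj (g (par' i')) (g i')) := by
    intro y
    constructor
    · intro h
      constructor
      · have := h j hjr
        rwa [hfj, hfx y g (par j) hpj] at this
      · intro i' hi'
        have hi'r : i'.1 ≠ r := fun hh => hi' (Subtype.ext hh)
        have := h i'.1 hi'r
        rwa [hfx y g i'.1 i'.2, hfx y g (par i'.1) ((par' i').2)] at this
    · rintro ⟨h1, h2⟩ i hi
      rcases eq_or_ne i j with rfl | hij
      · rw [hfj, hfx y g (par i) hpj]; exact h1
      · have h2' := h2 ⟨i, hij⟩ (fun hh => hi (congrArg Subtype.val hh))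
        rw [hfx y g i hij, hfx y g (par i) ((par' ⟨i, hij⟩).2)]
        exact h2'
  have hv : ∀ y : W, e.symm (y, g) v₀ = g v₀' := fun y => hfx y g v₀ (Ne.symm hjv)
  calc ∑ y : W, Ind G r par (e.symm (y, g)) * dd G (e.symm (y, g) v₀) ^ t
      = ∑ y : W, (aa G (g z') y * Ind G r' par' g) * dd G (g v₀') ^ t := by
        refine Finset.sum_congr rfl fun y _ => ?_
        rw [hv y]
        congr 1
        by_cases hB : (∀ i', i' ≠ r' → G.Adj (g (par' i')) (g i'))
        · by_cases hA : G.Adj (g z') y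
          · rw [Ind_eq_one G ((hcond y).mpr ⟨hA, hB⟩), Ind_eq_one G hB]
            unfold aa; rw [if_pos hA]; ring
          · rw [Ind_eq_zero G (fun hh => hA ((hcond y).mp hh).1)]
            unfold aa; rw [if_neg hA]; ring
        · rw [Ind_eq_zero G (fun hh => hB ((hcond y).mp hh).2),
            Ind_eq_zero G hB]
          ring
    _ = Ind G r' par' g * dd G (g z') * dd G (g v₀') ^ t := by
        rw [← Finset.sum_mul, ← Finset.sum_mul]
        unfold dd
        ring

lemma sum_dd_pow_congr {k l : ℕ} (h : k = l) : ∑ w, dd G w ^ k = ∑ w, dd G w ^ l := by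
  rw [h]

/-- bound the doubly-weighted count given bounds for the singly-weighted counts -/
lemma F2_bound {ι' : Type*} [Fintype (ι' → W)] (r' : ι') (par' : ι' → ι') (z' v₀' : ι')
    (t n : ℕ)
    (H : ∀ (v₁ : ι') (s : ℕ), F G r' par' v₁ s ≤ ∑ w, dd G w ^ (n + s)) :
    F2 G r' par' z' v₀' t ≤ ∑ w, dd G w ^ (n + 1 + t) := by
  by_cases hzv : z' = v₀'
  · rw [hzv, F2_eq_F_same]
    exact le_trans (H v₀' (t+1)) (le_of_eq (sum_dd_pow_congr G (by omega)))
  · rcases Nat.eq_zero_or_pos t with rfl | htpos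
    · rw [F2_eq_F_zero]
      exact le_trans (H z' 1) (le_of_eq (sum_dd_pow_congr G (by omega)))
    · refine F2_le G r' par' z' v₀' t htpos _ (sum_dd_pow_nonneg G _) ?_ ?_
      · exact le_trans (H v₀' (t+1)) (le_of_eq (sum_dd_pow_congr G (by omega)))
      · exact le_trans (H z' (t+1)) (le_of_eq (sum_dd_pow_congr G (by omega)))

end Delete

universe u

/-- The main induction: hom-type counts of parent systems are bounded by the star values. -/
lemma main (n : ℕ) :
    ∀ (ι : Type u) (inst1 : Fintype ι) (inst2 : Fintype (ι → W)) (r : ι) (par : ι → ι)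
      (ord : ι → ℕ), par r = r → (∀ i, i ≠ r → ord (par i) < ord i) →
      @Fintype.card ι inst1 = n + 1 →
      ∀ (v₀ : ι) (t : ℕ), @F W _ G ι inst2 r par v₀ t ≤ ∑ w, dd G w ^ (n + t) := by
  induction n with
  | zero =>
    intro ι inst1 inst2 r par ord hr hord hcard v₀ t
    have hsub : ∀ x : ι, x = r := by
      intro x
      exact @Fintype.card_le_one_iff ι inst1 |>.mp (le_of_eq hcard) x r
    have hIone : ∀ f : ι → W, Ind G r par f = 1 := by
      intro f
      refine Ind_eq_one G ?_
      intro i hi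
      exact absurd (hsub i) hi
    have hbij : Function.Bijective (fun f : ι → W => f v₀) := by
      constructor
      · intro f1 f2 hfe
        funext x
        have hx : x = v₀ := (hsub x).trans (hsub v₀).symm
        rw [hx]; exact hfe
      · intro y
        exact ⟨fun _ => y, rfl⟩
    have : @F W _ G ι inst2 r par v₀ t = ∑ y : W, dd G y ^ t := by
      unfold F
      refine Fintype.sum_bijective _ hbij _ _ ?_
      intro f
      rw [hIone f, one_mul]
    rw [this]
    exact le_of_eq (sum_dd_pow_congr G (by omega)).symm
  | succ n ih =>
    intro ι inst1 inst2 r par ord hr hord hcard v₀ t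
    letI := inst1
    letI := inst2
    haveI : DecidableEq ι := Classical.decEq ι
    -- a vertex of maximal ord among non-roots is a non-parent
    have hne : (Finset.univ.erase r).Nonempty := by
      rw [← Finset.card_pos, Finset.card_erase_of_mem (Finset.mem_univ r), Finset.card_univ,
        hcard]
      omega
    obtain ⟨j₀, hj₀mem, hj₀max⟩ := Finset.exists_max_image (Finset.univ.erase r) ord hne
    have hj₀r : j₀ ≠ r := (Finset.mem_erase.mp hj₀mem).1
    have hj₀np : ∀ i, i ≠ r → par i ≠ j₀ := by
      intro i hir hpar
      have h1 : ord j₀ < ord i := hpar ▸ hord i hir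
      have h2 := hj₀max i (Finset.mem_erase.mpr ⟨hir, Finset.mem_univ i⟩)
      omega
    by_cases hex : ∃ j, j ≠ r ∧ j ≠ v₀ ∧ ∀ i, i ≠ r → par i ≠ j
    · obtain ⟨j, hjr, hjv, hjnp⟩ := hex
      have hpj : par j ≠ j := fun h => absurd (h ▸ hord j hjr) (lt_irrefl _)
      have hcard' : Fintype.card {i : ι // i ≠ j} = n + 1 := by
        have h1 : Fintype.card {i : ι // i ≠ j} = Fintype.card ι - 1 := by
          rw [Fintype.card_subtype_compl (fun i : ι => i = j), Fintype.card_subtype_eq]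
        rw [h1, hcard]
        omega
      rw [delete_key G r par v₀ t hr j hjr hjv hpj hjnp]
      refine F2_bound G _ _ _ _ t n ?_
      intro v₁ s
      refine le_of_le_of_eq
        (ih {i : ι // i ≠ j} _ _ (⟨r, Ne.symm hjr⟩ : {i : ι // i ≠ j})
          (parDel r par hr j hjr hjnp) (fun i => ord i.1)
          (Subtype.ext (by simp [parDel, hr]))
          (fun i' hi' => hord i'.1 (fun hh => hi' (Subtype.ext hh)))
          hcard' v₁ s) ?_
      rfl
    · -- reversal case: v₀ is the unique non-root non-parent
      push_neg at hex
      have hv₀ : j₀ = v₀ := by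
        by_contra h
        obtain ⟨i, hi1, hi2⟩ := hex j₀ hj₀r h
        exact hj₀np i hi1 hi2
      have hv₀r : v₀ ≠ r := hv₀ ▸ hj₀r
      have hv₀np : ∀ i, i ≠ r → par i ≠ v₀ := hv₀ ▸ hj₀np
      -- every x ≠ v₀ has a preimage under par among non-roots
      have hchain : ∀ k, ∀ i : ι, i ≠ r → ord i ≤ k → ∃ c, c ≠ r ∧ par c = r := by
        intro k
        induction k with
        | zero =>
          intro i hir hle
          rcases eq_or_ne (par i) r with h | h
          · exact ⟨i, hir, h⟩
          · have := hord i hir; omega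
        | succ k ihk =>
          intro i hir hle
          rcases eq_or_ne (par i) r with h | h
          · exact ⟨i, hir, h⟩
          · exact ihk (par i) h (by have := hord i hir; omega)
      have hpar_sur : ∀ x : ι, x ≠ v₀ → ∃ c, c ≠ r ∧ par c = x := by
        intro x hx
        rcases eq_or_ne x r with heq | hxr
        · rw [heq]
          have hge : 1 < Fintype.card ι := by omega
          obtain ⟨i0, hi0⟩ := Fintype.exists_ne_of_one_lt_card hge r
          exact hchain (ord i0) i0 hi0 le_rfl
        · exact hex x hxr hx
      -- par is injective on non-roots
      have hinj : ∀ c1 c2, c1 ≠ r → c2 ≠ r → par c1 = par c2 → c1 = c2 := by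
        have hsub : Finset.univ.erase v₀ ⊆ (Finset.univ.erase r).image par := by
          intro x hx
          obtain ⟨c, hc1, hc2⟩ := hpar_sur x (Finset.mem_erase.mp hx).1
          exact Finset.mem_image.mpr ⟨c, Finset.mem_erase.mpr ⟨hc1, Finset.mem_univ c⟩, hc2⟩
        have hsub2 : (Finset.univ.erase r).image par ⊆ Finset.univ.erase v₀ := by
          intro x hx
          obtain ⟨c, hc1, hc2⟩ := Finset.mem_image.mp hx
          refine Finset.mem_erase.mpr ⟨?_, Finset.mem_univ x⟩
          rw [← hc2]
          exact hv₀np c (Finset.mem_erase.mp hc1).1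
        have heq : (Finset.univ.erase r).image par = Finset.univ.erase v₀ :=
          le_antisymm hsub2 hsub
        have hcards : ((Finset.univ.erase r).image par).card = (Finset.univ.erase r).card := by
          rw [heq, Finset.card_erase_of_mem (Finset.mem_univ _),
            Finset.card_erase_of_mem (Finset.mem_univ _)]
        have hinjOn := Finset.injOn_of_card_image_eq hcards
        intro c1 c2 h1 h2 hpp
        exact hinjOn (by simp [Finset.mem_coe, Finset.mem_erase, h1])
          (by simp [Finset.mem_coe, Finset.mem_erase, h2]) hpp
      -- choose the reversed parent map
      have hsur' : ∀ x : ι, ∃ c, x ≠ v₀ → (c ≠ r ∧ par c = x) := by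
        intro x
        by_cases hx : x = v₀
        · exact ⟨r, fun hc => absurd hx hc⟩
        · obtain ⟨c, hc⟩ := hpar_sur x hx
          exact ⟨c, fun _ => hc⟩
      choose ch hch using hsur'
      set par2 : ι → ι := fun x => if x = v₀ then v₀ else ch x with hpar2
      have hpar2v : par2 v₀ = v₀ := if_pos rfl
      have hpar2x : ∀ x, x ≠ v₀ → par2 x = ch x := fun x hx => if_neg hx
      -- F is the same for the reversed system
      have hFeq : @F W _ G ι inst2 r par v₀ t = @F W _ G ι inst2 v₀ par2 v₀ t := by
        unfold F
        refine Finset.sum_congr rfl fun f _ => ?_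
        congr 1
        apply Ind_congr
        constructor
        · intro h x hx
          have hc := hch x hx
          have := h (ch x) hc.1
          rw [hc.2] at this
          rw [hpar2x x hx]
          exact this.symm
        · intro h i hi
          have hpv : par i ≠ v₀ := hv₀np i hi
          have h2 := h (par i) hpv
          rw [hpar2x (par i) hpv] at h2
          have hcc := hch (par i) hpv
          have : ch (par i) = i := hinj (ch (par i)) i hcc.1 hi hcc.2
          rw [this] at h2
          exact h2.symm
      -- new ord
      have hord2 : ∀ x, x ≠ v₀ →
          (Finset.univ.sup ord + 1 - ord (par2 x)) < (Finset.univ.sup ord + 1 - ord x) := by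
        intro x hx
        have hc := hch x hx
        have h1 : ord x < ord (ch x) := by
          have := hord (ch x) hc.1
          rw [hc.2] at this
          exact this
        have hB : ord (ch x) ≤ Finset.univ.sup ord := Finset.le_sup (Finset.mem_univ _)
        rw [hpar2x x hx]
        omega
      have hnp2 : ∀ x, x ≠ v₀ → par2 x ≠ r := by
        intro x hx
        rw [hpar2x x hx]
        exact (hch x hx).1
      have hp2r : par2 r ≠ r := by
        rw [hpar2x r (Ne.symm hv₀r)]
        exact (hch r (Ne.symm hv₀r)).1
      have hrv : r ≠ v₀ := Ne.symm hv₀r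
      rw [hFeq, delete_key G v₀ par2 v₀ t hpar2v r hrv hrv hp2r hnp2]
      have hcard' : Fintype.card {i : ι // i ≠ r} = n + 1 := by
        have h1 : Fintype.card {i : ι // i ≠ r} = Fintype.card ι - 1 := by
          rw [Fintype.card_subtype_compl (fun i : ι => i = r), Fintype.card_subtype_eq]
        rw [h1, hcard]
        omega
      refine F2_bound G _ _ _ _ t n ?_
      intro v₁ s
      refine le_of_le_of_eq
        (ih {i : ι // i ≠ r} _ _ (⟨v₀, Ne.symm hrv⟩ : {i : ι // i ≠ r})
          (parDel v₀ par2 hpar2v r hrv hnp2)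
          (fun i => Finset.univ.sup ord + 1 - ord i.1)
          (Subtype.ext (by simp [parDel, hpar2v]))
          (fun i' hi' => hord2 i'.1 (fun hh => hi' (Subtype.ext hh)))
          hcard' v₁ s) ?_
      rfl

section TreeStructure

/-- rooted parent structure of a tree -/
lemma tree_structure {V : Type*} (T : SimpleGraph V) (hT : T.IsTree) :
    ∃ (r : V) (par : V → V) (dep : V → ℕ),
      par r = r ∧ (∀ u, u ≠ r → dep (par u) < dep u) ∧
      (∀ u, u ≠ r → T.Adj (par u) u) ∧
      (∀ u v, T.Adj u v → ((v ≠ r ∧ par v = u) ∨ (u ≠ r ∧ par u = v))) := by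
  classical
  have hconn := hT.isConnected
  obtain ⟨r⟩ := hconn.nonempty
  -- parent existence
  have hpar_ex : ∀ u : V, ∃ w, u ≠ r → (T.Adj w u ∧ T.dist w r < T.dist u r) := by
    intro u
    by_cases hu : u = r
    · exact ⟨r, fun h => absurd hu h⟩
    · have hpos : 0 < T.dist u r := hconn.pos_dist_of_ne hu
      obtain ⟨p, hp⟩ := (hconn.preconnected u r).exists_walk_length_eq_dist
      cases p with
      | nil => rw [SimpleGraph.Walk.length_nil] at hp; omega
      | @cons _ w _ h q =>
        refine ⟨w, fun _ => ⟨h.symm, ?_⟩⟩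
        have h1 := SimpleGraph.dist_le q
        rw [SimpleGraph.Walk.length_cons] at hp
        omega
  choose pw hpw using hpar_ex
  set par : V → V := fun u => if u = r then r else pw u with hpardef
  -- shortest paths
  have hpath : ∀ u : V, ∃ p : T.Walk u r, p.IsPath ∧ p.length = T.dist u r := by
    intro u
    obtain ⟨p, hp⟩ := (hconn.preconnected u r).exists_walk_length_eq_dist
    exact ⟨p, p.isPath_of_length_eq_dist hp, hp⟩
  choose sp hsp1 hsp2 using hpath
  have hmem : ∀ (w : V) (q : T.Walk w r) (x : V), x ∈ q.support → T.dist x r ≤ q.length := by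
    intro w q x hx
    have h1 := SimpleGraph.dist_le (q.dropUntil x hx)
    have h2 := q.length_dropUntil_le hx
    omega
  -- uniqueness of a strictly-closer neighbour
  have huniq : ∀ u w w', u ≠ r → T.Adj w u → T.Adj w' u → T.dist w r < T.dist u r →
      T.dist w' r < T.dist u r → w = w' := by
    intro u w w' _ haw haw' hdw hdw'
    have hnotmem : ∀ (w0 : V), T.dist w0 r < T.dist u r → u ∉ (sp w0).support := by
      intro w0 hd hmem0
      have := hmem w0 (sp w0) u hmem0
      rw [hsp2 w0] at this
      omega
    have hp1 : (SimpleGraph.Walk.cons haw.symm (sp w)).IsPath := by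
      rw [SimpleGraph.Walk.cons_isPath_iff]
      exact ⟨hsp1 w, hnotmem w hdw⟩
    have hp2 : (SimpleGraph.Walk.cons haw'.symm (sp w')).IsPath := by
      rw [SimpleGraph.Walk.cons_isPath_iff]
      exact ⟨hsp1 w', hnotmem w' hdw'⟩
    obtain ⟨p0, _, hup⟩ := hT.existsUnique_path u r
    have e1 := hup _ hp1
    have e2 := hup _ hp2
    have heq : SimpleGraph.Walk.cons haw.symm (sp w)
        = SimpleGraph.Walk.cons haw'.symm (sp w') := e1.trans e2.symm
    have := congrArg (fun p : T.Walk u r => p.getVert 1) heq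
    simpa [SimpleGraph.Walk.getVert_cons_succ] using this
  -- adjacent vertices have different distance to the root
  have hdepne : ∀ u v, T.Adj u v → T.dist u r ≠ T.dist v r := by
    intro u v hadj heq
    have hvnot : v ∉ (sp u).support := by
      intro hmem0
      have hLle := (sp u).length_dropUntil_le hmem0
      have hLge := SimpleGraph.dist_le ((sp u).dropUntil v hmem0)
      have hadd : ((sp u).takeUntil v hmem0).length + ((sp u).dropUntil v hmem0).length
          = (sp u).length := by
        have := congrArg SimpleGraph.Walk.length ((sp u).take_spec hmem0)
        rwa [SimpleGraph.Walk.length_append] at this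
      have hsp2u := hsp2 u
      have htake0 : ((sp u).takeUntil v hmem0).length = 0 := by omega
      exact (T.ne_of_adj hadj) (SimpleGraph.Walk.eq_of_length_eq_zero htake0)
    have hp2 : (SimpleGraph.Walk.cons hadj.symm (sp u)).IsPath := by
      rw [SimpleGraph.Walk.cons_isPath_iff]
      exact ⟨hsp1 u, hvnot⟩
    obtain ⟨p0, _, hup⟩ := hT.existsUnique_path v r
    have e1 := hup _ hp2
    have e2 := hup _ (hsp1 v)
    have heql : (SimpleGraph.Walk.cons hadj.symm (sp u)).length = (sp v).length := by
      rw [e1.trans e2.symm]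
    rw [SimpleGraph.Walk.length_cons, hsp2 u, hsp2 v] at heql
    omega
  have hparr : par r = r := if_pos rfl
  have hparx : ∀ u, u ≠ r → par u = pw u := fun u hu => if_neg hu
  have hadjp : ∀ u, u ≠ r → T.Adj (par u) u := by
    intro u hu; rw [hparx u hu]; exact (hpw u hu).1
  have hordp : ∀ u, u ≠ r → T.dist (par u) r < T.dist u r := by
    intro u hu; rw [hparx u hu]; exact (hpw u hu).2
  refine ⟨r, par, fun u => T.dist u r, hparr, hordp, hadjp, ?_⟩
  intro u v hadj
  rcases lt_or_gt_of_ne (hdepne u v hadj) with hlt | hgt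
  · left
    have hvr : v ≠ r := by
      intro h
      rw [h, SimpleGraph.dist_self] at hlt
      omega
    exact ⟨hvr, huniq v (par v) u hvr (hadjp v hvr) hadj (hordp v hvr) hlt⟩
  · right
    have hur : u ≠ r := by
      intro h
      rw [h, SimpleGraph.dist_self] at hgt
      omega
    exact ⟨hur, huniq u (par u) v hur (hadjp u hur) hadj.symm (hordp u hur) hgt⟩

end TreeStructure

section Counting

open Classical in
/-- indicator that a function is a graph homomorphism -/
noncomputable def homInd {V : Type*} (H : SimpleGraph V) (f : V → W) : ℝ :=
  if (∀ u v, H.Adj u v → G.Adj (f u) (f v)) then 1 else 0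

lemma homCount_eq {V : Type*} [Fintype (V → W)] (H : SimpleGraph V) :
    (homCount H G : ℝ) = ∑ f : V → W, homInd G H f := by
  classical
  have e : (H →g G) ≃ {f : V → W // ∀ u v, H.Adj u v → G.Adj (f u) (f v)} :=
    { toFun := fun φ => ⟨φ, fun u v h => φ.map_rel h⟩
      invFun := fun p => ⟨p.1, fun {u v} h => p.2 u v h⟩
      left_inv := fun φ => rfl
      right_inv := fun p => rfl }
  have h1 : homCount H G
      = Finset.card (Finset.univ.filter
          (fun f : V → W => ∀ u v, H.Adj u v → G.Adj (f u) (f v))) := by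
    rw [homCount, Nat.card_congr e, Nat.card_eq_fintype_card, Fintype.card_subtype]
  rw [h1, Finset.card_filter]
  push_cast
  refine Finset.sum_congr rfl fun f _ => ?_
  unfold homInd
  by_cases h : (∀ u v, H.Adj u v → G.Adj (f u) (f v)) <;> simp [h]

open Classical in
/-- a star-like parent system sums to the power of the degrees -/
lemma F_const_root {ι : Type*} [Fintype ι] [Fintype (ι → W)] (r : ι) :
    F G r (fun _ => r) r 0 = ∑ y : W, dd G y ^ (Fintype.card ι - 1) := by
  classical
  have hcards : Fintype.card {i : ι // i ≠ r} = Fintype.card ι - 1 := by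
    rw [Fintype.card_subtype_compl (fun i : ι => i = r), Fintype.card_subtype_eq]
  set e := Equiv.funSplitAt r W with hedef
  have hfr : ∀ (y : W) (g : {i : ι // i ≠ r} → W), e.symm (y, g) r = y := by
    intro y g; simp [hedef]
  have hfx : ∀ (y : W) (g : {i : ι // i ≠ r} → W) (x : ι) (hx : x ≠ r),
      e.symm (y, g) x = g ⟨x, hx⟩ := by
    intro y g x hx; simp [hedef, hx]
  unfold F
  rw [← Equiv.sum_comp e.symm, Fintype.sum_prod_type]
  rw [← hcards]
  refine Finset.sum_congr rfl fun y _ => ?_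
  have hstep : ∀ g : {i : ι // i ≠ r} → W,
      Ind G r (fun _ => r) (e.symm (y, g)) * dd G (e.symm (y, g) r) ^ 0
        = ∏ i' : {i : ι // i ≠ r}, aa G y (g i') := by
    intro g
    rw [pow_zero, mul_one]
    have hcond : (∀ i, i ≠ r → G.Adj (e.symm (y, g) ((fun _ => r) i)) (e.symm (y, g) i))
        ↔ (∀ i' : {i : ι // i ≠ r}, G.Adj y (g i')) := by
      constructor
      · intro h i'
        have := h i'.1 i'.2
        rwa [hfr, hfx y g i'.1 i'.2] at this
      · intro h i hi
        have := h ⟨i, hi⟩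
        rwa [hfr, hfx y g i hi]
    by_cases h : (∀ i' : {i : ι // i ≠ r}, G.Adj y (g i'))
    · rw [Ind_eq_one G (hcond.mpr h)]
      exact (Finset.prod_eq_one fun i' _ => by unfold aa; rw [if_pos (h i')]).symm
    · rw [Ind_eq_zero G (fun hh => h (hcond.mp hh))]
      push_neg at h
      obtain ⟨i₀, h0⟩ := h
      exact (Finset.prod_eq_zero (Finset.mem_univ i₀) (by unfold aa; rw [if_neg h0])).symm
  calc ∑ g : {i : ι // i ≠ r} → W,
        Ind G r (fun _ => r) (e.symm (y, g)) * dd G (e.symm (y, g) r) ^ 0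
      = ∑ g : {i : ι // i ≠ r} → W, ∏ i' : {i : ι // i ≠ r}, aa G y (g i') :=
        Finset.sum_congr rfl fun g _ => hstep g
    _ = ∏ _i' : {i : ι // i ≠ r}, ∑ w : W, aa G y w := by
        rw [← Fintype.piFinset_univ, ← Finset.prod_univ_sum]
    _ = dd G y ^ (Fintype.card {i : ι // i ≠ r}) := by
        rw [Finset.prod_const]
        unfold dd
        rw [Finset.card_univ]

lemma starCount_eq (m : ℕ) [NeZero m] [Fintype (Fin m → W)] :
    (homCount (starGraph m) G : ℝ) = ∑ y : W, dd G y ^ (m - 1) := by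
  rw [homCount_eq G (starGraph m)]
  have hstep : ∀ f : Fin m → W,
      homInd G (starGraph m) f = Ind G (0 : Fin m) (fun _ => (0 : Fin m)) f := by
    intro f
    have hcond : (∀ u v, (starGraph m).Adj u v → G.Adj (f u) (f v))
        ↔ (∀ i : Fin m, i ≠ 0 → G.Adj (f ((fun _ => (0 : Fin m)) i)) (f i)) := by
      constructor
      · intro h i hi
        exact h 0 i ⟨Ne.symm hi, Or.inl rfl⟩
      · rintro h u v ⟨huv, h0⟩
        rcases h0 with h0 | h0
        · rw [h0]
          rw [h0] at huv
          exact h v (Ne.symm huv)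
        · rw [h0]
          rw [h0] at huv
          exact (h u huv).symm
    by_cases h : (∀ u v, (starGraph m).Adj u v → G.Adj (f u) (f v))
    · rw [Ind_eq_one G (hcond.mp h)]
      unfold homInd
      rw [if_pos h]
    · rw [Ind_eq_zero G (fun hh => h (hcond.mpr hh))]
      unfold homInd
      rw [if_neg h]
  rw [Finset.sum_congr rfl fun f _ => hstep f]
  have := F_const_root G (0 : Fin m)
  rw [Fintype.card_fin] at this
  rw [← this]
  unfold F
  exact Finset.sum_congr rfl fun f _ => by rw [pow_zero, mul_one]

lemma treeCount_eq {V : Type*} [Fintype (V → W)] (T : SimpleGraph V)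
    (r : V) (par : V → V)
    (hadjp : ∀ u, u ≠ r → T.Adj (par u) u)
    (hedge : ∀ u v, T.Adj u v → ((v ≠ r ∧ par v = u) ∨ (u ≠ r ∧ par u = v))) :
    (homCount T G : ℝ) = F G r par r 0 := by
  rw [homCount_eq G T]
  refine Finset.sum_congr rfl fun f _ => ?_
  have hcond : (∀ u v, T.Adj u v → G.Adj (f u) (f v))
      ↔ (∀ i, i ≠ r → G.Adj (f (par i)) (f i)) := by
    constructor
    · intro h i hi
      exact h (par i) i (hadjp i hi)
    · intro h u v hadj
      rcases hedge u v hadj with ⟨hvr, hpv⟩ | ⟨hur, hpu⟩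
      · have := h v hvr
        rwa [hpv] at this
      · have := h u hur
        rw [hpu] at this
        exact this.symm
  have : homInd G T f = Ind G r par f := by
    by_cases h : (∀ u v, T.Adj u v → G.Adj (f u) (f v))
    · rw [Ind_eq_one G (hcond.mp h)]
      unfold homInd
      rw [if_pos h]
    · rw [Ind_eq_zero G (fun hh => h (hcond.mpr hh))]
      unfold homInd
      rw [if_neg h]
  rw [this, pow_zero, mul_one]

end Counting

end TreeStar

theorem stmt_5 (m : ℕ) [NeZero m] {V W : Type*} [Fintype V] [Fintype W]
    (T : SimpleGraph V) (hT : T.IsTree) (hcard : Fintype.card V = m)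
    (G : SimpleGraph W) :
    homCount T G ≤ homCount (starGraph m) G := by
  classical
  open TreeStar in
  obtain ⟨r, par, dep, hr, hord, hadjp, hedge⟩ := TreeStar.tree_structure T hT
  obtain ⟨n, hn⟩ := Nat.exists_eq_succ_of_ne_zero (NeZero.ne m)
  rw [← Nat.cast_le (α := ℝ)]
  calc (homCount T G : ℝ)
      = TreeStar.F G r par r 0 := TreeStar.treeCount_eq G T r par hadjp hedge
    _ ≤ ∑ w, TreeStar.dd G w ^ (n + 0) :=
        TreeStar.main G n V inferInstance inferInstance r par dep hr hord
          (by rw [hcard, hn]) r 0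
    _ = ∑ w, TreeStar.dd G w ^ (m - 1) := TreeStar.sum_dd_pow_congr G (by omega)
    _ = (homCount (starGraph m) G : ℝ) := (TreeStar.starCount_eq G m).symm
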